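/- Let n ≥ 1 be an integer. On the elliptic curve S_n over ℚ(v,t) given by Y² = X³ + (v²−1)((v²−1)−2tⁿ)X² + t^{2n}(v²−1)²X, the point P = (tⁿ(v²−1), tⁿ(v²−1)²) is a ℚ(v,t)-rational point satisfying 2P = (0,0), and P has order exactly 4 in the group of ℚ(v,t)-rational points. (For n = 1 this is the 4-torsion section v ↦ (t(v²−1), t(v²−1)²) of Proposition 4.2.) -/

import Mathlib

/-- The field `ℚ(v,t)` of rational functions in two variables over `ℚ`. -/
noncomputable abbrev Kvt : Type := FractionRing (MvPolynomial (Fin 2) ℚ)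

/-- The variable `v` of `ℚ(v,t)`. -/
noncomputable def vK : Kvt := algebraMap (MvPolynomial (Fin 2) ℚ) Kvt (MvPolynomial.X 0)

/-- The variable `t` of `ℚ(v,t)`. -/
noncomputable def tK : Kvt := algebraMap (MvPolynomial (Fin 2) ℚ) Kvt (MvPolynomial.X 1)

/-- `S_n`: the Weierstrass curve `Y² = X³ + (v² - 1)((v² - 1) - 2tⁿ)X² + t^{2n}(v² - 1)²X`
over `ℚ(v,t)`, a Weierstrass model of the elliptic fibration on the threefold `Z_(n)^(3)`
birational to `Y_(n)^(3)`. -/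
noncomputable def Sn (n : ℕ) : WeierstrassCurve Kvt :=
  ⟨0, (vK ^ 2 - 1) * ((vK ^ 2 - 1) - 2 * tK ^ n), 0, tK ^ (2 * n) * (vK ^ 2 - 1) ^ 2, 0⟩

lemma tK_ne_zero : tK ≠ 0 := by
  have h := IsFractionRing.injective (MvPolynomial (Fin 2) ℚ) Kvt
  simp only [tK, Ne, ← (algebraMap (MvPolynomial (Fin 2) ℚ) Kvt).map_zero]
  intro hc
  exact MvPolynomial.X_ne_zero 1 (h hc)

lemma A_ne_zero : vK ^ 2 - 1 ≠ 0 := by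
  have h := IsFractionRing.injective (MvPolynomial (Fin 2) ℚ) Kvt
  have : vK ^ 2 - 1 = algebraMap (MvPolynomial (Fin 2) ℚ) Kvt
      (MvPolynomial.X 0 ^ 2 - 1) := by
    simp [vK, map_sub, map_pow]
  rw [this, Ne, ← (algebraMap (MvPolynomial (Fin 2) ℚ) Kvt).map_zero]
  intro hc
  have h2 := h hc
  have := congrArg MvPolynomial.constantCoeff h2
  simp at this

/-- For `n ≥ 1`, on the elliptic curve
`S_n : Y² = X³ + (v² - 1)((v² - 1) - 2tⁿ)X² + t^{2n}(v² - 1)²X` over `ℚ(v,t)`, the point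
`P = (tⁿ(v² - 1), tⁿ(v² - 1)²)` is a rational point satisfying `2P = (0, 0)`, and `P` has
order exactly `4` in the group of `ℚ(v,t)`-rational points. -/
theorem stmt13 (n : ℕ) (hn : 1 ≤ n) :
    ∃ (h : (Sn n).toAffine.Nonsingular (tK ^ n * (vK ^ 2 - 1)) (tK ^ n * (vK ^ 2 - 1) ^ 2))
      (h0 : (Sn n).toAffine.Nonsingular 0 0),
      2 • (WeierstrassCurve.Affine.Point.some _ _ h) = WeierstrassCurve.Affine.Point.some _ _ h0 ∧
      addOrderOf (WeierstrassCurve.Affine.Point.some _ _ h) = 4 := by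
  have hT : tK ^ n ≠ 0 := pow_ne_zero n tK_ne_zero
  have hA : vK ^ 2 - 1 ≠ 0 := A_ne_zero
  have hy : tK ^ n * (vK ^ 2 - 1) ^ 2 ≠ 0 :=
    mul_ne_zero hT (pow_ne_zero 2 hA)
  have hW : ∀ a b : Kvt, (Sn n).toAffine.negY a b = -b := by
    intro a b
    simp [WeierstrassCurve.Affine.negY, Sn]
  -- P is nonsingular
  have h : (Sn n).toAffine.Nonsingular (tK ^ n * (vK ^ 2 - 1)) (tK ^ n * (vK ^ 2 - 1) ^ 2) := by
    rw [WeierstrassCurve.Affine.nonsingular_iff]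
    constructor
    · rw [WeierstrassCurve.Affine.equation_iff]
      show _ = _
      simp only [Sn]
      ring
    · right
      simp only [Sn]
      intro hc
      apply hy
      have : (2 : Kvt) * (tK ^ n * (vK ^ 2 - 1) ^ 2) = 0 := by linear_combination hc
      have h2 : (2 : Kvt) ≠ 0 := two_ne_zero
      exact (mul_eq_zero.mp this).resolve_left h2
  -- (0,0) is nonsingular
  have h0 : (Sn n).toAffine.Nonsingular 0 0 := by
    rw [WeierstrassCurve.Affine.nonsingular_iff]
    constructor
    · rw [WeierstrassCurve.Affine.equation_iff]
      show _ = _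
      simp only [Sn]
      ring
    · left
      simp only [Sn]
      intro hc
      apply mul_ne_zero (pow_ne_zero (2 * n) tK_ne_zero) (pow_ne_zero 2 hA)
      linear_combination -hc
  refine ⟨h, h0, ?_⟩
  have hyne : tK ^ n * (vK ^ 2 - 1) ^ 2 ≠
      (Sn n).toAffine.negY (tK ^ n * (vK ^ 2 - 1)) (tK ^ n * (vK ^ 2 - 1) ^ 2) := by
    rw [hW]
    intro hc
    apply hy
    have : (2 : Kvt) * (tK ^ n * (vK ^ 2 - 1) ^ 2) = 0 := by linear_combination hc
    exact (mul_eq_zero.mp this).resolve_left two_ne_zero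
  -- compute the slope
  have hslope : (Sn n).toAffine.slope (tK ^ n * (vK ^ 2 - 1)) (tK ^ n * (vK ^ 2 - 1))
      (tK ^ n * (vK ^ 2 - 1) ^ 2) (tK ^ n * (vK ^ 2 - 1) ^ 2) = vK ^ 2 - 1 := by
    rw [WeierstrassCurve.Affine.slope_of_Y_ne rfl hyne, hW]
    simp only [Sn]
    rw [div_eq_iff (by intro hc; apply hy; linear_combination hc / 2)]
    ring
  have hX : (Sn n).toAffine.addX (tK ^ n * (vK ^ 2 - 1)) (tK ^ n * (vK ^ 2 - 1))
      ((Sn n).toAffine.slope (tK ^ n * (vK ^ 2 - 1)) (tK ^ n * (vK ^ 2 - 1))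
        (tK ^ n * (vK ^ 2 - 1) ^ 2) (tK ^ n * (vK ^ 2 - 1) ^ 2)) = 0 := by
    rw [hslope]
    simp only [WeierstrassCurve.Affine.addX, Sn]
    ring
  have hY : (Sn n).toAffine.addY (tK ^ n * (vK ^ 2 - 1)) (tK ^ n * (vK ^ 2 - 1))
      (tK ^ n * (vK ^ 2 - 1) ^ 2)
      ((Sn n).toAffine.slope (tK ^ n * (vK ^ 2 - 1)) (tK ^ n * (vK ^ 2 - 1))
        (tK ^ n * (vK ^ 2 - 1) ^ 2) (tK ^ n * (vK ^ 2 - 1) ^ 2)) = 0 := by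
    rw [WeierstrassCurve.Affine.addY, hW, hslope,
      WeierstrassCurve.Affine.negAddY]
    rw [hslope] at hX
    rw [hX]
    ring
  have hdouble : 2 • (WeierstrassCurve.Affine.Point.some _ _ h) =
      WeierstrassCurve.Affine.Point.some _ _ h0 := by
    rw [two_nsmul]
    rw [WeierstrassCurve.Affine.Point.add_self_of_Y_ne hyne]
    have key : ∀ {x₁ y₁ x₂ y₂ : Kvt} (_ : x₁ = x₂) (_ : y₁ = y₂)
        (H₁ : (Sn n).toAffine.Nonsingular x₁ y₁) (H₂ : (Sn n).toAffine.Nonsingular x₂ y₂),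
        WeierstrassCurve.Affine.Point.some _ _ H₁ = WeierstrassCurve.Affine.Point.some _ _ H₂ := by
      intro x₁ y₁ x₂ y₂ hx hy' H₁ H₂
      subst hx; subst hy'; rfl
    exact key hX hY _ _
  refine ⟨hdouble, ?_⟩
  have h4 : (2 : ℕ) ^ (1 + 1) • (WeierstrassCurve.Affine.Point.some _ _ h) = 0 := by
    have : (2:ℕ) ^ (1+1) = 2 * 2 := by norm_num
    rw [this, mul_smul, hdouble]
    rw [two_nsmul]
    exact WeierstrassCurve.Affine.Point.add_self_of_Y_eq (by rw [hW]; ring)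
  have h2 : ¬ (2 : ℕ) ^ 1 • (WeierstrassCurve.Affine.Point.some _ _ h) = 0 := by
    rw [pow_one, hdouble]
    exact WeierstrassCurve.Affine.Point.some_ne_zero h0
  have := addOrderOf_eq_prime_pow (p := 2) (n := 1) h2 h4
  simpa using this
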